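/- Let g(x) = ‖x‖₁ on ℝ^n and ν > 0. Then ∂_B prox_{νg} is a strong linear Newton approximation of prox_{νg} at every x ∈ ℝ^n: for each x there exist constants C > 0 and δ > 0 such that for every y ∈ ℝ^n with ‖y − x‖₂ < δ and every V ∈ ∂_B prox_{νg}(y), one has ‖prox_{νg}(x) − prox_{νg}(y) − V(x − y)‖₂ ≤ C ‖x − y‖₂². -/

import Mathlib

open Filter Topology

noncomputable def St (ν t : ℝ) : ℝ := if ν < t then t - ν else if t < -ν then t + ν else 0

lemma st_of_abs_le {ν t : ℝ} (h : |t| ≤ ν) : St ν t = 0 := by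
  rcases abs_le.mp h with ⟨h1, h2⟩
  unfold St
  rw [if_neg (by linarith), if_neg (by linarith)]

lemma st_of_pos {ν t : ℝ} (h : ν < t) : St ν t = t - ν := if_pos h

lemma st_of_neg {ν t : ℝ} (hν : 0 < ν) (h : t < -ν) : St ν t = t + ν := by
  unfold St
  rw [if_neg (by linarith), if_pos h]

lemma st_opt {ν : ℝ} (hν : 0 < ν) (w s : ℝ) :
    ν * |St ν w| + (St ν w - w) ^ 2 / 2 + (s - St ν w) ^ 2 / 2 ≤ ν * |s| + (s - w) ^ 2 / 2 := by
  have h2 : s ≤ |s| := le_abs_self s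
  have h3 : -|s| ≤ s := neg_abs_le s
  unfold St
  split_ifs with hw1 hw2
  · rw [abs_of_pos (by linarith)]; nlinarith
  · rw [abs_of_neg (by linarith)]; nlinarith
  · push_neg at hw1 hw2
    rw [abs_zero]
    nlinarith [mul_nonneg (by linarith : (0:ℝ) ≤ |s| - s) (by linarith : (0:ℝ) ≤ ν + w),
      mul_nonneg (by linarith : (0:ℝ) ≤ |s| + s) (by linarith : (0:ℝ) ≤ ν - w)]

lemma st_deriv_small {ν t : ℝ} (h : |t| < ν) : deriv (St ν) t = 0 := by
  rcases abs_lt.mp h with ⟨h1, h2⟩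
  have hev : St ν =ᶠ[nhds t] fun _ => (0 : ℝ) := by
    filter_upwards [Ioo_mem_nhds h1 h2] with s hs
    exact st_of_abs_le (abs_le.mpr ⟨hs.1.le, hs.2.le⟩)
  rw [hev.deriv_eq]
  simp

lemma st_deriv_pos {ν t : ℝ} (h : ν < t) : deriv (St ν) t = 1 := by
  have hev : St ν =ᶠ[nhds t] fun s => s - ν := by
    filter_upwards [Ioi_mem_nhds h] with s hs
    exact st_of_pos hs
  rw [hev.deriv_eq, deriv_sub_const]
  simp

lemma st_deriv_neg {ν t : ℝ} (hν : 0 < ν) (h : t < -ν) : deriv (St ν) t = 1 := by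
  have hev : St ν =ᶠ[nhds t] fun s => s + ν := by
    filter_upwards [Iio_mem_nhds h] with s hs
    exact st_of_neg hν hs
  rw [hev.deriv_eq, deriv_add_const]
  simp

lemma euc_norm_sq {n : ℕ} (v : EuclideanSpace ℝ (Fin n)) : ‖v‖ ^ 2 = ∑ i, (v i) ^ 2 := by
  rw [EuclideanSpace.norm_eq, Real.sq_sqrt (by positivity)]
  simp [sq_abs]

lemma euc_coord_le {n : ℕ} (v : EuclideanSpace ℝ (Fin n)) (i : Fin n) : |v i| ≤ ‖v‖ := by
  have h : (v i) ^ 2 ≤ ‖v‖ ^ 2 := by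
    rw [euc_norm_sq]
    exact Finset.single_le_sum (fun j _ => sq_nonneg (v j)) (Finset.mem_univ i)
  nlinarith [abs_nonneg (v i), norm_nonneg v, sq_abs (v i)]

lemma prox_formula {n : ℕ} {ν : ℝ} (hν : 0 < ν)
    (prox : EuclideanSpace ℝ (Fin n) → EuclideanSpace ℝ (Fin n))
    (hprox : ∀ x, IsMinOn
      (fun z : EuclideanSpace ℝ (Fin n) => ν * (∑ i, |z i|) + ‖z - x‖ ^ 2 / 2)
      Set.univ (prox x))
    (w : EuclideanSpace ℝ (Fin n)) (i : Fin n) : prox w i = St ν (w i) := by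
  set p := prox w with hp
  have hmin : ∀ s : ℝ, ν * |p i| + (p i - w i) ^ 2 / 2 ≤ ν * |s| + (s - w i) ^ 2 / 2 := by
    intro s
    set z : EuclideanSpace ℝ (Fin n) := p + EuclideanSpace.single i (s - p i) with hz
    have hzi : z i = s := by
      simp [hz, EuclideanSpace.single_apply]
    have hzj : ∀ j, j ≠ i → z j = p j := by
      intro j hj
      simp [hz, EuclideanSpace.single_apply, hj]
    have h := isMinOn_iff.mp (hprox w) z (Set.mem_univ z)
    rw [euc_norm_sq (p - w), euc_norm_sq (z - w)] at h
    simp only [PiLp.sub_apply] at h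
    rw [← Finset.add_sum_erase _ (fun j => |p j|) (Finset.mem_univ i),
        ← Finset.add_sum_erase _ (fun j => |z j|) (Finset.mem_univ i),
        ← Finset.add_sum_erase _ (fun j => (p j - w j) ^ 2) (Finset.mem_univ i),
        ← Finset.add_sum_erase _ (fun j => (z j - w j) ^ 2) (Finset.mem_univ i)] at h
    have e1 : ∑ j ∈ Finset.univ.erase i, |z j| = ∑ j ∈ Finset.univ.erase i, |p j| :=
      Finset.sum_congr rfl fun j hj => by rw [hzj j (Finset.ne_of_mem_erase hj)]
    have e2 : ∑ j ∈ Finset.univ.erase i, (z j - w j) ^ 2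
        = ∑ j ∈ Finset.univ.erase i, (p j - w j) ^ 2 :=
      Finset.sum_congr rfl fun j hj => by rw [hzj j (Finset.ne_of_mem_erase hj)]
    rw [e1, e2, hzi] at h
    linarith
  have h1 := hmin (St ν (w i))
  have h2 := st_opt hν (w i) (p i)
  have h3 : (p i - St ν (w i)) ^ 2 ≤ 0 := by linarith
  have h4 : p i - St ν (w i) = 0 := by nlinarith [sq_nonneg (p i - St ν (w i))]
  linarith

lemma st_diff_of_prox {n : ℕ} {ν : ℝ}
    (prox : EuclideanSpace ℝ (Fin n) → EuclideanSpace ℝ (Fin n))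
    (hp : ∀ w i, prox w i = St ν (w i))
    (u : EuclideanSpace ℝ (Fin n)) (hu : DifferentiableAt ℝ prox u) (i : Fin n) :
    DifferentiableAt ℝ (St ν) (u i) := by
  set g : ℝ → EuclideanSpace ℝ (Fin n) :=
    fun t => u + (t - u i) • EuclideanSpace.single i (1 : ℝ) with hg
  have hgd : ∀ t : ℝ, DifferentiableAt ℝ g t := by
    intro t
    apply DifferentiableAt.const_add
    exact (differentiableAt_id.sub_const (u i)).smul_const _
  have hgi : ∀ t, g t i = t := by
    intro t
    simp [hg, EuclideanSpace.single_apply]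
  have hgu : g (u i) = u := by
    simp [hg]
  have key : St ν = fun t => prox (g t) i := by
    funext t
    rw [hp (g t) i, hgi]
  rw [key]
  have houter : DifferentiableAt ℝ (fun w => prox w i) u :=
    ((EuclideanSpace.proj (𝕜 := ℝ) i).differentiableAt).comp u hu
  exact DifferentiableAt.comp (u i) (hgu ▸ houter) (hgd (u i))

lemma fderiv_coord_of_prox {n : ℕ} {ν : ℝ}
    (prox : EuclideanSpace ℝ (Fin n) → EuclideanSpace ℝ (Fin n))
    (hp : ∀ w i, prox w i = St ν (w i))
    (u : EuclideanSpace ℝ (Fin n)) (hu : DifferentiableAt ℝ prox u)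
    (v : EuclideanSpace ℝ (Fin n)) (i : Fin n) :
    fderiv ℝ prox u v i = deriv (St ν) (u i) * v i := by
  have hSt := st_diff_of_prox prox hp u hu i
  have h1 : HasFDerivAt (fun w : EuclideanSpace ℝ (Fin n) => prox w i)
      ((EuclideanSpace.proj (𝕜 := ℝ) i).comp (fderiv ℝ prox u)) u :=
    (EuclideanSpace.proj (𝕜 := ℝ) i).hasFDerivAt.comp u hu.hasFDerivAt
  have h2 : HasFDerivAt (fun w : EuclideanSpace ℝ (Fin n) => St ν (w i))
      (deriv (St ν) (u i) • (EuclideanSpace.proj (𝕜 := ℝ) i)) u :=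
    by have := hSt.hasDerivAt.comp_hasFDerivAt u (EuclideanSpace.proj (𝕜 := ℝ) i).hasFDerivAt; exact this
  have hfun : (fun w : EuclideanSpace ℝ (Fin n) => prox w i)
      = fun w : EuclideanSpace ℝ (Fin n) => St ν (w i) := funext fun w => hp w i
  rw [hfun] at h1
  have heq := h1.unique h2
  calc fderiv ℝ prox u v i
      = ((EuclideanSpace.proj (𝕜 := ℝ) i).comp (fderiv ℝ prox u)) v := rfl
    _ = (deriv (St ν) (u i) • (EuclideanSpace.proj (𝕜 := ℝ) i)) v := by rw [heq]
    _ = deriv (St ν) (u i) * v i := rfl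

/-- The B-subdifferential of a map `F : ℝ^n → ℝ^n` at `x`: the set of limits of
derivatives `∇F(x^(k))` along sequences `x^(k) → x` of differentiability points of `F`. -/
def Bsubdiff {n : ℕ} (F : EuclideanSpace ℝ (Fin n) → EuclideanSpace ℝ (Fin n))
    (x : EuclideanSpace ℝ (Fin n)) :
    Set (EuclideanSpace ℝ (Fin n) →L[ℝ] EuclideanSpace ℝ (Fin n)) :=
  {V | ∃ u : ℕ → EuclideanSpace ℝ (Fin n),
      Filter.Tendsto u Filter.atTop (nhds x) ∧
      (∀ k, DifferentiableAt ℝ F (u k)) ∧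
      Filter.Tendsto (fun k => fderiv ℝ F (u k)) Filter.atTop (nhds V)}

/-- For `g = ‖·‖₁` and `ν > 0`, `∂_B prox_{νg}` is a strong linear Newton
approximation of `prox_{νg}` at every `x`: there exist `C > 0` and `δ > 0` such that for
every `y` with `‖y − x‖ < δ` and every `V ∈ ∂_B prox_{νg}(y)`,
`‖prox_{νg}(x) − prox_{νg}(y) − V(x − y)‖ ≤ C ‖x − y‖²`. -/
theorem statement6 {n : ℕ} (ν : ℝ) (hν : 0 < ν)
    (prox : EuclideanSpace ℝ (Fin n) → EuclideanSpace ℝ (Fin n))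
    (hprox : ∀ x, IsMinOn
      (fun z : EuclideanSpace ℝ (Fin n) => ν * (∑ i, |z i|) + ‖z - x‖ ^ 2 / 2)
      Set.univ (prox x))
    (x : EuclideanSpace ℝ (Fin n)) :
    ∃ C > (0 : ℝ), ∃ δ > (0 : ℝ), ∀ y : EuclideanSpace ℝ (Fin n), ‖y - x‖ < δ →
      ∀ V ∈ Bsubdiff prox y, ‖prox x - prox y - V (x - y)‖ ≤ C * ‖x - y‖ ^ 2 := by
  have hp : ∀ w i, prox w i = St ν (w i) := prox_formula hν prox hprox
  refine ⟨1, one_pos, ?_⟩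
  set e : Fin n → ℝ := fun i => if |x i| = ν then ν else abs (|x i| - ν) with he
  set F : Finset ℝ := insert ν (Finset.image e Finset.univ) with hF
  have hFne : ν ∈ F := Finset.mem_insert_self _ _
  set δ : ℝ := F.min' ⟨ν, hFne⟩ with hδ
  have hδpos : 0 < δ := by
    rw [hδ]; refine (Finset.lt_min'_iff _ _).mpr ?_
    intro b hb
    rcases Finset.mem_insert.mp hb with rfl | hb
    · exact hν
    · obtain ⟨i, -, rfl⟩ := Finset.mem_image.mp hb
      rw [he]
      dsimp only
      split_ifs with h
      · exact hν
      · exact abs_pos.mpr (sub_ne_zero.mpr h)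
  have hδν : δ ≤ ν := Finset.min'_le _ _ hFne
  have hδe : ∀ i, δ ≤ e i := fun i =>
    Finset.min'_le _ _ (Finset.mem_insert_of_mem (Finset.mem_image_of_mem _ (Finset.mem_univ i)))
  refine ⟨δ, hδpos, ?_⟩
  intro y hy V hV
  obtain ⟨u, hu, hud, hVt⟩ := hV
  have hyc : ∀ i, |y i - x i| < δ := by
    intro i
    have h := euc_coord_le (y - x) i
    simpa [PiLp.sub_apply] using lt_of_le_of_lt h hy
  have hui : ∀ i, Tendsto (fun k => u k i) atTop (nhds (y i)) := by
    intro i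
    exact ((EuclideanSpace.proj (𝕜 := ℝ) i).continuous.tendsto y).comp hu
  -- eventual coordinatewise equality
  have hEv : ∀ i, ∀ᶠ k in atTop, deriv (St ν) (u k i) * (x i - y i) = St ν (x i) - St ν (y i) := by
    intro i
    have hyci := hyc i
    have habs : |y i| - |x i| ≤ |y i - x i| := by
      have := abs_sub_abs_le_abs_sub (y i) (x i)
      linarith
    have hsmall : ∀ h : |y i| < ν, ∀ᶠ k in atTop, |u k i| < ν := fun h =>
      (hui i).eventually ((continuous_abs.continuousAt).eventually_lt continuousAt_const h)
    have hbig : ∀ h : ν < y i, ∀ᶠ k in atTop, ν < u k i := fun h =>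
      (hui i).eventually (continuousAt_const.eventually_lt continuousAt_id h)
    have hbign : ∀ h : y i < -ν, ∀ᶠ k in atTop, u k i < -ν := fun h =>
      (hui i).eventually (continuousAt_id.eventually_lt continuousAt_const h)
    rcases lt_trichotomy (|x i|) ν with hlt | heq | hgt
    · -- |x i| < ν : δ ≤ ν - |x i|, both thresholds vanish
      have hδi : δ ≤ ν - |x i| := by
        have := hδe i
        rw [he] at this
        simp only at this
        rw [if_neg (ne_of_lt hlt), abs_of_neg (by linarith)] at this
        linarith
      have hyi : |y i| < ν := by linarith
      filter_upwards [hsmall hyi] with k hk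
      rw [st_deriv_small hk, st_of_abs_le hlt.le, st_of_abs_le hyi.le]
      ring
    · -- |x i| = ν
      rcases (abs_eq hν.le).mp heq with hx | hx
      · rcases lt_trichotomy (y i) ν with hy1 | hy2 | hy3
        · have hyi : |y i| < ν := abs_lt.mpr ⟨by rcases abs_lt.mp hyci with ⟨a, b⟩; linarith, hy1⟩
          filter_upwards [hsmall hyi] with k hk
          rw [st_deriv_small hk, st_of_abs_le heq.le,
            st_of_abs_le hyi.le]
          ring
        · filter_upwards with k
          rw [hx, hy2]
          ring
        · filter_upwards [hbig hy3] with k hk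
          rw [st_deriv_pos hk, st_of_abs_le heq.le, st_of_pos hy3, hx]
          ring
      · rcases lt_trichotomy (y i) (-ν) with hy1 | hy2 | hy3
        · filter_upwards [hbign hy1] with k hk
          rw [st_deriv_neg hν hk, st_of_abs_le heq.le,
            st_of_neg hν hy1, hx]
          ring
        · filter_upwards with k
          rw [hx, hy2]
          ring
        · have hyi : |y i| < ν := abs_lt.mpr ⟨hy3, by rcases abs_lt.mp hyci with ⟨a, b⟩; linarith⟩
          filter_upwards [hsmall hyi] with k hk
          rw [st_deriv_small hk, st_of_abs_le heq.le,
            st_of_abs_le hyi.le]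
          ring
    · -- ν < |x i| : δ ≤ |x i| - ν
      have hδi : δ ≤ |x i| - ν := by
        have := hδe i
        rw [he] at this
        simp only at this
        rw [if_neg (ne_of_gt hgt), abs_of_pos (by linarith)] at this
        linarith
      rcases lt_abs.mp hgt with hxp | hxn
      · have hyb : ν < y i := by
          rcases abs_lt.mp hyci with ⟨a, b⟩
          rw [abs_of_pos (by linarith)] at hδi
          linarith
        filter_upwards [hbig hyb] with k hk
        rw [st_deriv_pos hk, st_of_pos hxp, st_of_pos hyb]
        ring
      · have hxn' : x i < -ν := by
          rcases abs_cases (x i) with ⟨h1, h2⟩ | ⟨h1, h2⟩ <;> linarith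
        have hyb : y i < -ν := by
          rcases abs_lt.mp hyci with ⟨a, b⟩
          rw [abs_of_neg (by linarith)] at hδi
          linarith
        filter_upwards [hbign hyb] with k hk
        rw [st_deriv_neg hν hk, st_of_neg hν hxn', st_of_neg hν hyb]
        ring
  have hEvAll : ∀ᶠ k in atTop, fderiv ℝ prox (u k) (x - y) = prox x - prox y := by
    filter_upwards [Filter.eventually_all.mpr hEv] with k hk
    ext i
    rw [fderiv_coord_of_prox prox hp (u k) (hud k) (x - y) i]
    have h1 : (x - y) i = x i - y i := rfl
    have h2 : (prox x - prox y) i = prox x i - prox y i := rfl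
    rw [h1, h2, hp x i, hp y i]
    exact hk i
  have h1 : Tendsto (fun k => fderiv ℝ prox (u k) (x - y)) atTop (nhds (V (x - y))) :=
    ((ContinuousLinearMap.apply ℝ (EuclideanSpace ℝ (Fin n)) (x - y)).continuous.tendsto V).comp hVt
  have h2 : Tendsto (fun k => fderiv ℝ prox (u k) (x - y)) atTop (nhds (prox x - prox y)) :=
    Tendsto.congr' (hEvAll.mono fun k hk => hk.symm) tendsto_const_nhds
  have hVeq : V (x - y) = prox x - prox y := tendsto_nhds_unique h1 h2
  rw [hVeq, sub_self, norm_zero]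
  positivity
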